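/- arXiv:2106.02442 — 2 statements merged into one kernel-verified Lean document; each statement's English description precedes it below -/
import Mathlib

section
/- Let ρ : ℝ∖{0} → [0,∞) be a measurable even kernel with ∫_ℝ |t| ρ(t) dt = 1. Then for every real numbers a < b, E¹_ρ((a,b)) = 4 ∫_{−∞}^{a} ∫_{b}^{+∞} ρ(s−t) ds dt; in particular E¹_ρ((a,b)) decreases as the interval (a,b) grows. Moreover E¹_ρ(∅) = E¹_ρ(ℝ) = E¹_ρ((b,+∞)) = E¹_ρ((−∞,a)) = 0. -/
open MeasureTheory Metric Set Filter
open scoped ENNReal NNReal Topology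

noncomputable section

/-- Indicator of a subset of `ℝ`. -/
def ind1 (J : Set ℝ) (s : ℝ) : ℝ := J.indicator (fun _ => (1 : ℝ)) s

/-- One-dimensional nonlocal perimeter with kernel `ρ`. -/
def nlPer1 (ρ : ℝ → ℝ) (J : Set ℝ) : ℝ :=
  ∫ s : ℝ, ∫ t : ℝ, |ind1 J s - ind1 J t| * ρ (s - t)

/-- The essential boundary `∂*J` of a subset of `ℝ`: points where the density of `J`
tends neither to `0` nor to `1`. -/
def essBd1 (J : Set ℝ) : Set ℝ :=
  {x : ℝ | ¬ Tendsto (fun r : ℝ => volume (J ∩ ball x r) / volume (ball x r))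
      (𝓝[>] (0 : ℝ)) (𝓝 0) ∧
    ¬ Tendsto (fun r : ℝ => volume (J ∩ ball x r) / volume (ball x r))
      (𝓝[>] (0 : ℝ)) (𝓝 1)}

/-- One-dimensional perimeter: `P¹(J) = H⁰(∂*J)`. -/
def per1 (J : Set ℝ) : ℝ := (μH[(0 : ℝ)] (essBd1 J)).toReal

/-- One-dimensional critical energy `E¹_ρ = P¹ - Per¹_ρ`. -/
def critE1 (ρ : ℝ → ℝ) (J : Set ℝ) : ℝ := per1 J - nlPer1 ρ J

/-! ### Auxiliary lemmas -/

private lemma auxLintNeg (f : ℝ → ℝ≥0∞) (hf : Measurable f) : ∫⁻ x, f (-x) = ∫⁻ x, f x := by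
  rw [← lintegral_map hf measurable_neg, Measure.map_neg_eq_self]

private lemma auxLintSubLeft (f : ℝ → ℝ≥0∞) (hf : Measurable f) (a : ℝ) :
    ∫⁻ x, f (a - x) = ∫⁻ x, f x := by
  have hm : Measurable fun x : ℝ => a - x := by fun_prop
  rw [← lintegral_map hf hm, (Measure.measurePreserving_sub_left volume a).map_eq]

private lemma auxDouble (g : ℝ → ℝ≥0∞) (hg : Measurable g) (S T : Set ℝ)
    (hS : MeasurableSet S) (hT : MeasurableSet T) :
    ∫⁻ s in S, ∫⁻ t in T, g (s - t) = ∫⁻ u, g u * volume (S ∩ (fun s => s - u) ⁻¹' T) := by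
  have h1 : ∀ s : ℝ, (∫⁻ t in T, g (s - t)) =
      ∫⁻ u, g u * T.indicator (fun _ => 1) (s - u) := by
    intro s
    have hfm : Measurable (T.indicator fun t => g (s - t)) := by
      apply Measurable.indicator _ hT
      fun_prop
    rw [← lintegral_indicator hT, ← auxLintSubLeft _ hfm s]
    refine lintegral_congr fun u => ?_
    by_cases h : s - u ∈ T
    · simp [Set.indicator_of_mem h, sub_sub_cancel]
    · simp [Set.indicator_of_notMem h]
  calc ∫⁻ s in S, ∫⁻ t in T, g (s - t)
      = ∫⁻ s in S, ∫⁻ u, g u * T.indicator (fun _ => 1) (s - u) :=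
        lintegral_congr fun s => h1 s
    _ = ∫⁻ s, ∫⁻ u, S.indicator (fun _ => (1:ℝ≥0∞)) s *
          (g u * T.indicator (fun _ => 1) (s - u)) := by
        rw [← lintegral_indicator hS]
        refine lintegral_congr fun s => ?_
        by_cases h : s ∈ S
        · simp [Set.indicator_of_mem h]
        · simp [Set.indicator_of_notMem h]
    _ = ∫⁻ u, ∫⁻ s, S.indicator (fun _ => (1:ℝ≥0∞)) s *
          (g u * T.indicator (fun _ => 1) (s - u)) := by
        apply lintegral_lintegral_swap
        apply Measurable.aemeasurable
        exact ((measurable_const.indicator hS).comp measurable_fst).mul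
          ((hg.comp measurable_snd).mul ((measurable_const.indicator hT).comp
            (measurable_fst.sub measurable_snd)))
    _ = ∫⁻ u, g u * volume (S ∩ (fun s => s - u) ⁻¹' T) := by
        refine lintegral_congr fun u => ?_
        have hpre : MeasurableSet ((fun s : ℝ => s - u) ⁻¹' T) :=
          hT.preimage (by fun_prop)
        rw [← lintegral_indicator_one (hS.inter hpre),
          ← lintegral_const_mul _ (measurable_one.indicator (hS.inter hpre))]
        refine lintegral_congr fun s => ?_
        by_cases h1 : s ∈ S <;> by_cases h2 : s - u ∈ T <;>
          simp [Set.indicator_apply, h1, h2, Set.mem_preimage]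

private lemma auxIint (μ ν : Measure ℝ) [SigmaFinite μ] [SigmaFinite ν] (F : ℝ → ℝ → ℝ)
    (hF : Measurable fun p : ℝ × ℝ => F p.1 p.2)
    (h0 : ∀ x, 0 ≤ᵐ[ν] F x)
    (hfin : (∫⁻ x, ∫⁻ y, ENNReal.ofReal (F x y) ∂ν ∂μ) ≠ ⊤) :
    ∫ x, (∫ y, F x y ∂ν) ∂μ = (∫⁻ x, ∫⁻ y, ENNReal.ofReal (F x y) ∂ν ∂μ).toReal := by
  have hΦm : Measurable fun x => ∫⁻ y, ENNReal.ofReal (F x y) ∂ν := by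
    apply Measurable.lintegral_prod_right (f := fun x y => ENNReal.ofReal (F x y))
    exact hF.ennreal_ofReal
  have step1 : ∀ x, (∫ y, F x y ∂ν) = (∫⁻ y, ENNReal.ofReal (F x y) ∂ν).toReal := fun x =>
    integral_eq_lintegral_of_nonneg_ae (h0 x)
      ((hF.comp measurable_prodMk_left).aestronglyMeasurable)
  simp only [step1]
  rw [integral_eq_lintegral_of_nonneg_ae (ae_of_all _ fun x => ENNReal.toReal_nonneg)
    hΦm.ennreal_toReal.aestronglyMeasurable]
  congr 1
  refine lintegral_congr_ae ?_
  filter_upwards [ae_lt_top hΦm hfin] with x hx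
  exact ENNReal.ofReal_toReal hx.ne

private lemma auxDensTendsto {J : Set ℝ} {x : ℝ} {c : ℝ≥0∞}
    (h : ∀ᶠ r in 𝓝[>] (0:ℝ), volume (J ∩ ball x r) / volume (ball x r) = c) :
    Tendsto (fun r : ℝ => volume (J ∩ ball x r) / volume (ball x r)) (𝓝[>] (0:ℝ)) (𝓝 c) :=
  Tendsto.congr' (h.mono fun _ hr => hr.symm) tendsto_const_nhds

private lemma auxEvSmall {ε : ℝ} (hε : 0 < ε) : ∀ᶠ r in 𝓝[>] (0:ℝ), 0 < r ∧ r < ε := by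
  filter_upwards [Ioo_mem_nhdsGT_of_mem (show (0:ℝ) ∈ Ico (0:ℝ) ε from ⟨le_refl 0, hε⟩)]
    with r hr
  exact ⟨hr.1, hr.2⟩

private lemma auxEvPos : ∀ᶠ r in 𝓝[>] (0:ℝ), 0 < r :=
  eventually_mem_nhdsWithin

private lemma auxRatioHalf {r : ℝ} (hr : 0 < r) :
    ENNReal.ofReal r / ENNReal.ofReal (2 * r) = 2⁻¹ := by
  rw [ENNReal.ofReal_mul (by norm_num : (0:ℝ) ≤ 2)]
  have h0 : ENNReal.ofReal r ≠ 0 := by simp [hr]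
  have ht : ENNReal.ofReal r ≠ ⊤ := ENNReal.ofReal_ne_top
  rw [show ENNReal.ofReal r / (ENNReal.ofReal (2:ℝ) * ENNReal.ofReal r)
      = 1 * ENNReal.ofReal r / (ENNReal.ofReal (2:ℝ) * ENNReal.ofReal r) by rw [one_mul],
    ENNReal.mul_div_mul_right _ _ h0 ht]
  simp [ENNReal.ofReal_ofNat, one_div]

private lemma auxNotMem {J : Set ℝ} {x : ℝ}
    (h : Tendsto (fun r : ℝ => volume (J ∩ ball x r) / volume (ball x r)) (𝓝[>] (0:ℝ)) (𝓝 0) ∨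
      Tendsto (fun r : ℝ => volume (J ∩ ball x r) / volume (ball x r)) (𝓝[>] (0:ℝ)) (𝓝 1)) :
    x ∉ essBd1 J := by
  simp only [essBd1, mem_setOf_eq, not_and_or, not_not]
  exact h

private lemma auxMemHalf {J : Set ℝ} {x : ℝ}
    (h : Tendsto (fun r : ℝ => volume (J ∩ ball x r) / volume (ball x r)) (𝓝[>] (0:ℝ))
      (𝓝 2⁻¹)) : x ∈ essBd1 J := by
  constructor
  · intro h0
    have := tendsto_nhds_unique h h0
    simp [ENNReal.inv_eq_zero] at this
  · intro h1
    have := tendsto_nhds_unique h h1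
    rw [ENNReal.inv_eq_one] at this
    exact (by norm_num : (2:ℝ≥0∞) ≠ 1) this

private lemma auxVolBall (x r : ℝ) : volume (ball x r) = ENNReal.ofReal (2 * r) := by
  rw [Real.volume_ball]

private lemma auxDivSelf {r : ℝ} (hr : 0 < r) :
    ENNReal.ofReal (2 * r) / ENNReal.ofReal (2 * r) = 1 :=
  ENNReal.div_self (by simp [hr]) ENNReal.ofReal_ne_top

private lemma auxTendOne {J : Set ℝ} {x ε : ℝ} (hε : 0 < ε)
    (h : ∀ r : ℝ, 0 < r → r < ε → J ∩ ball x r = ball x r) :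
    Tendsto (fun r : ℝ => volume (J ∩ ball x r) / volume (ball x r)) (𝓝[>] (0:ℝ)) (𝓝 1) := by
  apply auxDensTendsto
  filter_upwards [auxEvSmall hε] with r hr
  rw [h r hr.1 hr.2, auxVolBall, auxDivSelf hr.1]

private lemma auxTendZero {J : Set ℝ} {x ε : ℝ} (hε : 0 < ε)
    (h : ∀ r : ℝ, 0 < r → r < ε → volume (J ∩ ball x r) = 0) :
    Tendsto (fun r : ℝ => volume (J ∩ ball x r) / volume (ball x r)) (𝓝[>] (0:ℝ)) (𝓝 0) := by
  apply auxDensTendsto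
  filter_upwards [auxEvSmall hε] with r hr
  rw [h r hr.1 hr.2, ENNReal.zero_div]

private lemma auxTendHalf {J : Set ℝ} {x ε : ℝ} (hε : 0 < ε)
    (h : ∀ r : ℝ, 0 < r → r < ε → volume (J ∩ ball x r) = ENNReal.ofReal r) :
    Tendsto (fun r : ℝ => volume (J ∩ ball x r) / volume (ball x r)) (𝓝[>] (0:ℝ)) (𝓝 2⁻¹) := by
  apply auxDensTendsto
  filter_upwards [auxEvSmall hε] with r hr
  rw [h r hr.1 hr.2, auxVolBall, auxRatioHalf hr.1]

private lemma auxMemLeft {a b : ℝ} (hab : a < b) : a ∈ essBd1 (Ioo a b) := by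
  refine auxMemHalf (auxTendHalf (by linarith : (0:ℝ) < b - a) fun r hr0 hrε => ?_)
  rw [Real.ball_eq_Ioo, Set.Ioo_inter_Ioo, Real.volume_Ioo,
    min_eq_right (by linarith), max_eq_left (by linarith)]
  congr 1
  ring

private lemma auxMemRight {a b : ℝ} (hab : a < b) : b ∈ essBd1 (Ioo a b) := by
  refine auxMemHalf (auxTendHalf (by linarith : (0:ℝ) < b - a) fun r hr0 hrε => ?_)
  rw [Real.ball_eq_Ioo, Set.Ioo_inter_Ioo, Real.volume_Ioo,
    min_eq_left (by linarith), max_eq_right (by linarith)]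
  congr 1
  ring

private lemma essBd1_Ioo {a b : ℝ} (hab : a < b) : essBd1 (Ioo a b) = {a, b} := by
  ext x
  simp only [mem_insert_iff, mem_singleton_iff]
  constructor
  · intro hx
    by_contra hne
    push_neg at hne
    obtain ⟨hna, hnb⟩ := hne
    refine absurd hx (auxNotMem ?_)
    rcases lt_or_gt_of_ne hna with h | h
    · left
      refine auxTendZero (by linarith : (0:ℝ) < a - x) fun r hr0 hrε => ?_
      rw [Real.ball_eq_Ioo, Set.Ioo_inter_Ioo, Real.volume_Ioo]
      apply ENNReal.ofReal_eq_zero.mpr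
      have h1 : min b (x + r) ≤ x + r := min_le_right _ _
      have h2 : a ≤ max a (x - r) := le_max_left _ _
      linarith
    · rcases lt_or_gt_of_ne hnb with h' | h'
      · right
        refine auxTendOne (by simp [h, h', sub_pos] : (0:ℝ) < min (x - a) (b - x))
          fun r hr0 hrε => ?_
        rw [Real.ball_eq_Ioo]
        apply inter_eq_right.mpr
        intro y hy
        simp only [mem_Ioo] at hy ⊢
        have h1 : r < x - a := lt_of_lt_of_le hrε (min_le_left _ _)
        have h2 : r < b - x := lt_of_lt_of_le hrε (min_le_right _ _)
        constructor <;> linarith [hy.1, hy.2]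
      · left
        refine auxTendZero (by linarith : (0:ℝ) < x - b) fun r hr0 hrε => ?_
        rw [Real.ball_eq_Ioo, Set.Ioo_inter_Ioo, Real.volume_Ioo]
        apply ENNReal.ofReal_eq_zero.mpr
        have h1 : min b (x + r) ≤ b := min_le_left _ _
        have h2 : x - r ≤ max a (x - r) := le_max_right _ _
        linarith
  · rintro (rfl | rfl)
    · exact auxMemLeft hab
    · exact auxMemRight hab

private lemma essBd1_Ioi (b : ℝ) : essBd1 (Ioi b) = {b} := by
  ext x
  simp only [mem_singleton_iff]
  constructor
  · intro hx
    by_contra hne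
    refine absurd hx (auxNotMem ?_)
    rcases lt_or_gt_of_ne hne with h | h
    · left
      refine auxTendZero (by linarith : (0:ℝ) < b - x) fun r hr0 hrε => ?_
      rw [Real.ball_eq_Ioo, inter_comm, Set.Ioo_inter_Ioi, Real.volume_Ioo]
      apply ENNReal.ofReal_eq_zero.mpr
      have h2 : b ≤ max (x - r) b := le_max_right _ _
      linarith
    · right
      refine auxTendOne (by linarith : (0:ℝ) < x - b) fun r hr0 hrε => ?_
      rw [Real.ball_eq_Ioo]
      apply inter_eq_right.mpr
      intro y hy
      simp only [mem_Ioo, mem_Ioi] at hy ⊢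
      linarith [hy.1]
  · rintro rfl
    refine auxMemHalf (auxTendHalf one_pos fun r hr0 _ => ?_)
    rw [Real.ball_eq_Ioo, inter_comm, Set.Ioo_inter_Ioi, Real.volume_Ioo,
      max_eq_right (by linarith)]
    congr 1
    ring

private lemma essBd1_Iio (a : ℝ) : essBd1 (Iio a) = {a} := by
  ext x
  simp only [mem_singleton_iff]
  constructor
  · intro hx
    by_contra hne
    refine absurd hx (auxNotMem ?_)
    rcases lt_or_gt_of_ne hne with h | h
    · right
      refine auxTendOne (by linarith : (0:ℝ) < a - x) fun r hr0 hrε => ?_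
      rw [Real.ball_eq_Ioo]
      apply inter_eq_right.mpr
      intro y hy
      simp only [mem_Ioo, mem_Iio] at hy ⊢
      linarith [hy.2]
    · left
      refine auxTendZero (by linarith : (0:ℝ) < x - a) fun r hr0 hrε => ?_
      rw [Real.ball_eq_Ioo, inter_comm, Set.Ioo_inter_Iio, Real.volume_Ioo]
      apply ENNReal.ofReal_eq_zero.mpr
      have h2 : min (x + r) a ≤ a := min_le_right _ _
      linarith
  · rintro rfl
    refine auxMemHalf (auxTendHalf one_pos fun r hr0 _ => ?_)
    rw [Real.ball_eq_Ioo, inter_comm, Set.Ioo_inter_Iio, Real.volume_Ioo,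
      min_eq_right (by linarith)]
    congr 1
    ring

private lemma essBd1_empty : essBd1 (∅ : Set ℝ) = ∅ := by
  ext x
  simp only [mem_empty_iff_false, iff_false]
  apply auxNotMem
  left
  apply auxDensTendsto
  filter_upwards with r
  simp

private lemma essBd1_univ : essBd1 (univ : Set ℝ) = ∅ := by
  ext x
  simp only [mem_empty_iff_false, iff_false]
  apply auxNotMem
  right
  apply auxDensTendsto
  filter_upwards [auxEvPos] with r hr
  rw [univ_inter, auxVolBall, auxDivSelf hr]

private lemma auxH0singleton (a : ℝ) : μH[(0:ℝ)] ({a} : Set ℝ) = 1 :=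
  Measure.hausdorffMeasure_zero_singleton a

private lemma auxH0pair {a b : ℝ} (hab : a ≠ b) : μH[(0:ℝ)] ({a, b} : Set ℝ) = 2 := by
  rw [Set.insert_eq, measure_union (by simpa using hab) (measurableSet_singleton b),
    auxH0singleton, auxH0singleton]
  norm_num

/-- Splitting the symmetric-difference double lintegral. -/
private lemma auxNlLint (ρ : ℝ → ℝ) (J : Set ℝ) (hJ : MeasurableSet J) :
    (∫⁻ s, ∫⁻ t, ENNReal.ofReal (|ind1 J s - ind1 J t| * ρ (s - t))) =
      (∫⁻ s in J, ∫⁻ t in Jᶜ, ENNReal.ofReal (ρ (s - t))) +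
        ∫⁻ s in Jᶜ, ∫⁻ t in J, ENNReal.ofReal (ρ (s - t)) := by
  rw [← lintegral_add_compl
    (fun s => ∫⁻ t, ENNReal.ofReal (|ind1 J s - ind1 J t| * ρ (s - t))) hJ]
  congr 1
  · refine setLIntegral_congr_fun hJ (fun s hs => ?_)
    rw [← lintegral_add_compl
      (fun t => ENNReal.ofReal (|ind1 J s - ind1 J t| * ρ (s - t))) hJ]
    have hz : (∫⁻ t in J, ENNReal.ofReal (|ind1 J s - ind1 J t| * ρ (s - t))) = 0 := by
      rw [setLIntegral_congr_fun hJ (fun t ht => ?_), lintegral_zero]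
      simp [ind1, Set.indicator_of_mem hs, Set.indicator_of_mem ht]
    rw [hz, zero_add]
    refine setLIntegral_congr_fun hJ.compl (fun t ht => ?_)
    simp [ind1, Set.indicator_of_mem hs, Set.indicator_of_notMem ht]
  · refine setLIntegral_congr_fun hJ.compl (fun s hs => ?_)
    rw [← lintegral_add_compl
      (fun t => ENNReal.ofReal (|ind1 J s - ind1 J t| * ρ (s - t))) hJ]
    have hz : (∫⁻ t in Jᶜ, ENNReal.ofReal (|ind1 J s - ind1 J t| * ρ (s - t))) = 0 := by
      rw [setLIntegral_congr_fun hJ.compl (fun t ht => ?_), lintegral_zero]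
      simp [ind1, Set.indicator_of_notMem hs, Set.indicator_of_notMem ht]
    rw [hz, add_zero]
    refine setLIntegral_congr_fun hJ (fun t ht => ?_)
    simp [ind1, Set.indicator_of_notMem hs, Set.indicator_of_mem ht]

private lemma auxNlPer (ρ : ℝ → ℝ) (hmeas : Measurable ρ) (hnn : ∀ t : ℝ, t ≠ 0 → 0 ≤ ρ t)
    (J : Set ℝ) (hJ : MeasurableSet J)
    (hfin : ((∫⁻ s in J, ∫⁻ t in Jᶜ, ENNReal.ofReal (ρ (s - t))) +
        ∫⁻ s in Jᶜ, ∫⁻ t in J, ENNReal.ofReal (ρ (s - t))) ≠ ⊤) :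
    nlPer1 ρ J = ((∫⁻ s in J, ∫⁻ t in Jᶜ, ENNReal.ofReal (ρ (s - t))) +
        ∫⁻ s in Jᶜ, ∫⁻ t in J, ENNReal.ofReal (ρ (s - t))).toReal := by
  have hindm : Measurable (ind1 J) := measurable_const.indicator hJ
  have hFm : Measurable fun p : ℝ × ℝ => |ind1 J p.1 - ind1 J p.2| * ρ (p.1 - p.2) :=
    (((hindm.comp measurable_fst).sub (hindm.comp measurable_snd)).abs).mul
      (hmeas.comp (measurable_fst.sub measurable_snd))
  have h0 : ∀ s : ℝ, 0 ≤ᵐ[(volume : Measure ℝ)]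
      fun t => |ind1 J s - ind1 J t| * ρ (s - t) := by
    intro s
    refine ae_of_all _ fun t => ?_
    by_cases h : ind1 J s = ind1 J t
    · simp [h]
    · refine mul_nonneg (abs_nonneg _) (hnn _ (sub_ne_zero_of_ne fun hst => h ?_))
      rw [hst]
  have := auxIint volume volume (fun s t => |ind1 J s - ind1 J t| * ρ (s - t)) hFm h0
    (by rw [auxNlLint ρ J hJ]; exact hfin)
  rw [nlPer1, this, auxNlLint ρ J hJ]

/-! ### preimage and volume computations -/

private lemma preIic (c u : ℝ) : (fun s : ℝ => s - u) ⁻¹' Iic c = Iic (c + u) := by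
  ext s; simp [sub_le_iff_le_add]

private lemma preIci (c u : ℝ) : (fun s : ℝ => s - u) ⁻¹' Ici c = Ici (c + u) := by
  ext s; simp [le_sub_iff_add_le, add_comm]

private lemma preIoi (c u : ℝ) : (fun s : ℝ => s - u) ⁻¹' Ioi c = Ioi (c + u) := by
  ext s; simp [lt_sub_iff_add_lt, add_comm]

private lemma preIio (c u : ℝ) : (fun s : ℝ => s - u) ⁻¹' Iio c = Iio (c + u) := by
  ext s; simp [sub_lt_iff_lt_add]

private lemma preIoo (p q u : ℝ) : (fun s : ℝ => s - u) ⁻¹' Ioo p q = Ioo (p + u) (q + u) := by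
  ext s
  simp only [mem_preimage, mem_Ioo]
  constructor <;> rintro ⟨h1, h2⟩ <;> constructor <;> linarith

private lemma volIooIic (a b c : ℝ) :
    volume (Ioo a b ∩ Iic c) = ENNReal.ofReal (min b c - a) := by
  rw [← measure_congr ((EventuallyEq.refl _ _).inter Iio_ae_eq_Iic),
    Set.Ioo_inter_Iio, Real.volume_Ioo]

private lemma volIooIci (a b c : ℝ) :
    volume (Ioo a b ∩ Ici c) = ENNReal.ofReal (b - max a c) := by
  rw [← measure_congr ((EventuallyEq.refl _ _).inter Ioi_ae_eq_Ici),
    Set.Ioo_inter_Ioi, Real.volume_Ioo]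

private lemma volIoiIic (b c : ℝ) : volume (Ioi b ∩ Iic c) = ENNReal.ofReal (c - b) := by
  rw [Set.Ioi_inter_Iic, Real.volume_Ioc]

private lemma volIicIoi (b c : ℝ) : volume (Iic b ∩ Ioi c) = ENNReal.ofReal (b - c) := by
  rw [inter_comm, Set.Ioi_inter_Iic, Real.volume_Ioc]

private lemma volIioIoi (a c : ℝ) : volume (Iio a ∩ Ioi c) = ENNReal.ofReal (a - c) := by
  rw [Set.Iio_inter_Ioi, Real.volume_Ioo]

private lemma volIioIci (a c : ℝ) : volume (Iio a ∩ Ici c) = ENNReal.ofReal (a - c) := by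
  rw [inter_comm, Set.Ici_inter_Iio, Real.volume_Ico]

private lemma volIciIio (a c : ℝ) : volume (Ici a ∩ Iio c) = ENNReal.ofReal (c - a) := by
  rw [Set.Ici_inter_Iio, Real.volume_Ico]

/-! ### the functions `Ψ` and `Xv` -/

private def auxPsi (ρ : ℝ → ℝ) (L : ℝ) : ℝ≥0∞ :=
  ∫⁻ u, ENNReal.ofReal (ρ u) * ENNReal.ofReal (u - L)

private lemma auxPsiZero (ρ : ℝ → ℝ) :
    auxPsi ρ 0 = ∫⁻ u, ENNReal.ofReal (ρ u) * ENNReal.ofReal u := by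
  unfold auxPsi
  exact lintegral_congr fun u => by rw [sub_zero]

private lemma auxPsiVal (ρ : ℝ → ℝ)
    (hnn : ∀ t : ℝ, t ≠ 0 → 0 ≤ ρ t)
    (heven : ∀ t : ℝ, ρ (-t) = ρ t)
    (hnorm : (∫ t : ℝ, |t| * ρ t) = 1)
    (hint : Integrable (fun t : ℝ => |t| * ρ t)) :
    auxPsi ρ 0 = ENNReal.ofReal (2⁻¹ : ℝ) := by
  have hIoi : (∫ u in Ioi (0:ℝ), |u| * ρ u) = 2⁻¹ := by
    have hsplit := intervalIntegral.integral_Iic_add_Ioi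
      (μ := volume) (f := fun u : ℝ => |u| * ρ u) (b := 0)
      hint.integrableOn hint.integrableOn
    have hneg : (∫ u in Iic (0:ℝ), |u| * ρ u) = ∫ u in Ioi (0:ℝ), |u| * ρ u := by
      have h := integral_comp_neg_Ioi (0:ℝ) (fun u : ℝ => |u| * ρ u)
      simp only [abs_neg, heven, neg_zero] at h
      exact h.symm
    rw [hnorm, hneg] at hsplit
    linarith
  rw [auxPsiZero]
  rw [← lintegral_add_compl (fun u => ENNReal.ofReal (ρ u) * ENNReal.ofReal u)
    (measurableSet_Ioi (a := (0:ℝ)))]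
  have hz : (∫⁻ u in (Ioi (0:ℝ))ᶜ, ENNReal.ofReal (ρ u) * ENNReal.ofReal u) = 0 := by
    rw [setLIntegral_congr_fun measurableSet_Ioi.compl
      (fun u (hu : u ∈ (Ioi (0:ℝ))ᶜ) => ?_), lintegral_zero]
    have hu0 : u ≤ 0 := by simpa using hu
    rw [ENNReal.ofReal_eq_zero.mpr hu0, mul_zero]
  rw [hz, add_zero]
  rw [setLIntegral_congr_fun measurableSet_Ioi
    (fun u (hu : u ∈ Ioi (0:ℝ)) => ?_)]
  · rw [← ofReal_integral_eq_lintegral_ofReal hint.integrableOn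
      ((ae_restrict_iff' measurableSet_Ioi).mpr (ae_of_all _ fun u hu =>
        mul_nonneg (abs_nonneg u) (hnn u (ne_of_gt hu)))), hIoi]
  · rw [← ENNReal.ofReal_mul (hnn u (ne_of_gt hu)), abs_of_pos hu, mul_comm]

private lemma auxPsiMono (ρ : ℝ → ℝ) {L L' : ℝ} (h : L ≤ L') : auxPsi ρ L' ≤ auxPsi ρ L :=
  lintegral_mono fun u => mul_le_mul_right (ENNReal.ofReal_le_ofReal (by linarith)) _

private def auxXv (ρ : ℝ → ℝ) (L : ℝ) : ℝ≥0∞ :=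
  ∫⁻ u, ENNReal.ofReal (ρ u) * ENNReal.ofReal (min u L)

private lemma auxXvMeas (ρ : ℝ → ℝ) (hmeas : Measurable ρ) (L : ℝ) :
    Measurable fun u : ℝ => ENNReal.ofReal (ρ u) * ENNReal.ofReal (min u L) := by
  apply hmeas.ennreal_ofReal.mul
  apply ENNReal.measurable_ofReal.comp
  fun_prop

private lemma auxXvPsi (ρ : ℝ → ℝ) (hmeas : Measurable ρ) {L : ℝ} (hL : 0 < L) :
    auxXv ρ L + auxPsi ρ L = auxPsi ρ 0 := by
  rw [auxPsiZero]
  unfold auxXv auxPsi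
  rw [← lintegral_add_left (auxXvMeas ρ hmeas L)]
  refine lintegral_congr fun u => ?_
  rw [← mul_add]
  congr 1
  rcases le_total u L with h | h
  · rw [min_eq_left h, ENNReal.ofReal_eq_zero.mpr (show u - L ≤ 0 by linarith), add_zero]
  · rw [min_eq_right h, ← ENNReal.ofReal_add hL.le (by linarith)]
    congr 1
    ring

private lemma auxNegInt (ρ : ℝ → ℝ) (hmeas : Measurable ρ) (heven : ∀ t : ℝ, ρ (-t) = ρ t)
    (φ : ℝ → ℝ≥0∞) (hφ : Measurable φ) :
    (∫⁻ u, ENNReal.ofReal (ρ u) * φ (-u)) = ∫⁻ u, ENNReal.ofReal (ρ u) * φ u :=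
  calc (∫⁻ u, ENNReal.ofReal (ρ u) * φ (-u))
      = ∫⁻ u, ENNReal.ofReal (ρ (-u)) * φ (-u) :=
        lintegral_congr fun u => by rw [heven]
    _ = ∫⁻ u, ENNReal.ofReal (ρ u) * φ u :=
        auxLintNeg _ (hmeas.ennreal_ofReal.mul hφ)

/-! ### the eight double integrals -/

private lemma auxDA (ρ : ℝ → ℝ) (hmeas : Measurable ρ) {a b : ℝ} (hab : a < b) :
    (∫⁻ s in Ioo a b, ∫⁻ t in Iic a, ENNReal.ofReal (ρ (s - t))) = auxXv ρ (b - a) := by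
  rw [auxDouble _ hmeas.ennreal_ofReal _ _ measurableSet_Ioo measurableSet_Iic]
  refine lintegral_congr fun u => ?_
  rw [preIic, volIooIic]
  congr 1
  rcases le_total (a + u) b with h | h
  · rw [min_eq_right h, min_eq_left (show u ≤ b - a by linarith)]
    ring
  · rw [min_eq_left h, min_eq_right (show b - a ≤ u by linarith)]

private lemma auxDB (ρ : ℝ → ℝ) (hmeas : Measurable ρ) (heven : ∀ t : ℝ, ρ (-t) = ρ t)
    {a b : ℝ} (hab : a < b) :
    (∫⁻ s in Ioo a b, ∫⁻ t in Ici b, ENNReal.ofReal (ρ (s - t))) = auxXv ρ (b - a) := by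
  rw [auxDouble _ hmeas.ennreal_ofReal _ _ measurableSet_Ioo measurableSet_Ici]
  have h1 : (∫⁻ u, ENNReal.ofReal (ρ u) *
      volume (Ioo a b ∩ (fun s => s - u) ⁻¹' Ici b)) =
      ∫⁻ u, ENNReal.ofReal (ρ u) * ENNReal.ofReal (min (-u) (b - a)) := by
    refine lintegral_congr fun u => ?_
    rw [preIci, volIooIci]
    congr 1
    rcases le_total (b + u) a with h | h
    · rw [max_eq_left h, min_eq_right (show b - a ≤ -u by linarith)]
    · rw [max_eq_right h, min_eq_left (show -u ≤ b - a by linarith)]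
      ring
  rw [h1]
  exact auxNegInt ρ hmeas heven (fun u => ENNReal.ofReal (min u (b - a)))
    (ENNReal.measurable_ofReal.comp (by fun_prop))

private lemma auxDC (ρ : ℝ → ℝ) (hmeas : Measurable ρ) (heven : ∀ t : ℝ, ρ (-t) = ρ t)
    {a b : ℝ} (hab : a < b) :
    (∫⁻ s in Iic a, ∫⁻ t in Ioo a b, ENNReal.ofReal (ρ (s - t))) = auxXv ρ (b - a) := by
  rw [auxDouble _ hmeas.ennreal_ofReal _ _ measurableSet_Iic measurableSet_Ioo]
  have h1 : (∫⁻ u, ENNReal.ofReal (ρ u) *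
      volume (Iic a ∩ (fun s => s - u) ⁻¹' Ioo a b)) =
      ∫⁻ u, ENNReal.ofReal (ρ u) * ENNReal.ofReal (min (-u) (b - a)) := by
    refine lintegral_congr fun u => ?_
    rw [preIoo, inter_comm, volIooIic]
    congr 1
    rcases le_total (b + u) a with h | h
    · rw [min_eq_left h, min_eq_right (show b - a ≤ -u by linarith)]
      ring
    · rw [min_eq_right h, min_eq_left (show -u ≤ b - a by linarith)]
      ring
  rw [h1]
  exact auxNegInt ρ hmeas heven (fun u => ENNReal.ofReal (min u (b - a)))
    (ENNReal.measurable_ofReal.comp (by fun_prop))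

private lemma auxDD (ρ : ℝ → ℝ) (hmeas : Measurable ρ) {a b : ℝ} (hab : a < b) :
    (∫⁻ s in Ici b, ∫⁻ t in Ioo a b, ENNReal.ofReal (ρ (s - t))) = auxXv ρ (b - a) := by
  rw [auxDouble _ hmeas.ennreal_ofReal _ _ measurableSet_Ici measurableSet_Ioo]
  refine lintegral_congr fun u => ?_
  rw [preIoo, inter_comm, volIooIci]
  congr 1
  rcases le_total (a + u) b with h | h
  · rw [max_eq_right h, min_eq_left (show u ≤ b - a by linarith)]
    ring
  · rw [max_eq_left h, min_eq_right (show b - a ≤ u by linarith)]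
    ring

private lemma auxRHSlint (ρ : ℝ → ℝ) (hmeas : Measurable ρ) (heven : ∀ t : ℝ, ρ (-t) = ρ t)
    {a b : ℝ} (hab : a < b) :
    (∫⁻ t in Iio a, ∫⁻ s in Ioi b, ENNReal.ofReal (ρ (s - t))) = auxPsi ρ (b - a) := by
  have hswap : (∫⁻ t in Iio a, ∫⁻ s in Ioi b, ENNReal.ofReal (ρ (s - t))) =
      ∫⁻ t in Iio a, ∫⁻ s in Ioi b, ENNReal.ofReal (ρ (t - s)) := by
    refine lintegral_congr fun t => lintegral_congr fun s => ?_
    rw [show ρ (s - t) = ρ (t - s) by rw [← heven (s - t), neg_sub]]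
  rw [hswap, auxDouble _ hmeas.ennreal_ofReal _ _ measurableSet_Iio measurableSet_Ioi]
  have h1 : (∫⁻ u, ENNReal.ofReal (ρ u) *
      volume (Iio a ∩ (fun s => s - u) ⁻¹' Ioi b)) =
      ∫⁻ u, ENNReal.ofReal (ρ u) * ENNReal.ofReal (-u - (b - a)) := by
    refine lintegral_congr fun u => ?_
    rw [preIoi, volIioIoi]
    congr 1
    ring
  rw [h1]
  exact auxNegInt ρ hmeas heven (fun u => ENNReal.ofReal (u - (b - a)))
    (ENNReal.measurable_ofReal.comp (by fun_prop))

private lemma auxDE (ρ : ℝ → ℝ) (hmeas : Measurable ρ) (b : ℝ) :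
    (∫⁻ s in Ioi b, ∫⁻ t in Iic b, ENNReal.ofReal (ρ (s - t))) = auxPsi ρ 0 := by
  rw [auxDouble _ hmeas.ennreal_ofReal _ _ measurableSet_Ioi measurableSet_Iic, auxPsiZero]
  refine lintegral_congr fun u => ?_
  rw [preIic, volIoiIic]
  congr 1
  ring

private lemma auxDF (ρ : ℝ → ℝ) (hmeas : Measurable ρ) (heven : ∀ t : ℝ, ρ (-t) = ρ t)
    (b : ℝ) :
    (∫⁻ s in Iic b, ∫⁻ t in Ioi b, ENNReal.ofReal (ρ (s - t))) = auxPsi ρ 0 := by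
  rw [auxDouble _ hmeas.ennreal_ofReal _ _ measurableSet_Iic measurableSet_Ioi]
  have h1 : (∫⁻ u, ENNReal.ofReal (ρ u) *
      volume (Iic b ∩ (fun s => s - u) ⁻¹' Ioi b)) =
      ∫⁻ u, ENNReal.ofReal (ρ u) * ENNReal.ofReal (-u) := by
    refine lintegral_congr fun u => ?_
    rw [preIoi, volIicIoi]
    congr 1
    ring
  rw [h1, auxPsiZero]
  exact auxNegInt ρ hmeas heven (fun u => ENNReal.ofReal u) ENNReal.measurable_ofReal

private lemma auxDG (ρ : ℝ → ℝ) (hmeas : Measurable ρ) (heven : ∀ t : ℝ, ρ (-t) = ρ t)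
    (a : ℝ) :
    (∫⁻ s in Iio a, ∫⁻ t in Ici a, ENNReal.ofReal (ρ (s - t))) = auxPsi ρ 0 := by
  rw [auxDouble _ hmeas.ennreal_ofReal _ _ measurableSet_Iio measurableSet_Ici]
  have h1 : (∫⁻ u, ENNReal.ofReal (ρ u) *
      volume (Iio a ∩ (fun s => s - u) ⁻¹' Ici a)) =
      ∫⁻ u, ENNReal.ofReal (ρ u) * ENNReal.ofReal (-u) := by
    refine lintegral_congr fun u => ?_
    rw [preIci, volIioIci]
    congr 1
    ring
  rw [h1, auxPsiZero]
  exact auxNegInt ρ hmeas heven (fun u => ENNReal.ofReal u) ENNReal.measurable_ofReal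

private lemma auxDH (ρ : ℝ → ℝ) (hmeas : Measurable ρ) (a : ℝ) :
    (∫⁻ s in Ici a, ∫⁻ t in Iio a, ENNReal.ofReal (ρ (s - t))) = auxPsi ρ 0 := by
  rw [auxDouble _ hmeas.ennreal_ofReal _ _ measurableSet_Ici measurableSet_Iio, auxPsiZero]
  refine lintegral_congr fun u => ?_
  rw [preIio, volIciIio]
  congr 1
  ring

/-! ### assembling the nonlocal perimeter -/

private lemma auxInnerMeas (ρ : ℝ → ℝ) (hmeas : Measurable ρ) (T : Set ℝ) :
    Measurable fun s : ℝ => ∫⁻ t in T, ENNReal.ofReal (ρ (s - t)) :=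
  Measurable.lintegral_prod_right (f := fun s t => ENNReal.ofReal (ρ (s - t)))
    ((hmeas.comp (measurable_fst.sub measurable_snd)).ennreal_ofReal)

private lemma auxIooSum (ρ : ℝ → ℝ) (hmeas : Measurable ρ) (heven : ∀ t : ℝ, ρ (-t) = ρ t)
    {a b : ℝ} (hab : a < b) :
    ((∫⁻ s in Ioo a b, ∫⁻ t in (Ioo a b)ᶜ, ENNReal.ofReal (ρ (s - t))) +
      ∫⁻ s in (Ioo a b)ᶜ, ∫⁻ t in Ioo a b, ENNReal.ofReal (ρ (s - t))) =
      4 * auxXv ρ (b - a) := by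
  have hc : (Ioo a b)ᶜ = Iic a ∪ Ici b := by
    ext x
    simp only [mem_compl_iff, mem_Ioo, mem_union, mem_Iic, mem_Ici, not_and_or, not_lt]
  have hdisj : Disjoint (Iic a) (Ici b) := Iic_disjoint_Ici.mpr (not_le.mpr hab)
  rw [hc]
  have e1 : (∫⁻ s in Ioo a b, ∫⁻ t in Iic a ∪ Ici b, ENNReal.ofReal (ρ (s - t))) =
      auxXv ρ (b - a) + auxXv ρ (b - a) := by
    rw [lintegral_congr fun s => lintegral_union measurableSet_Ici hdisj,
      lintegral_add_left (auxInnerMeas ρ hmeas (Iic a)),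
      auxDA ρ hmeas hab, auxDB ρ hmeas heven hab]
  have e2 : (∫⁻ s in Iic a ∪ Ici b, ∫⁻ t in Ioo a b, ENNReal.ofReal (ρ (s - t))) =
      auxXv ρ (b - a) + auxXv ρ (b - a) := by
    rw [lintegral_union measurableSet_Ici hdisj,
      auxDC ρ hmeas heven hab, auxDD ρ hmeas hab]
  rw [e1, e2]
  ring

private lemma auxPer1Ioo {a b : ℝ} (hab : a < b) : per1 (Ioo a b) = 2 := by
  rw [per1, essBd1_Ioo hab, auxH0pair (ne_of_lt hab)]
  simp

private lemma auxPer1Ioi (b : ℝ) : per1 (Ioi b) = 1 := by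
  rw [per1, essBd1_Ioi, auxH0singleton]
  simp

private lemma auxPer1Iio (a : ℝ) : per1 (Iio a) = 1 := by
  rw [per1, essBd1_Iio, auxH0singleton]
  simp

private lemma auxNlEmpty (ρ : ℝ → ℝ) : nlPer1 ρ (∅ : Set ℝ) = 0 := by
  simp [nlPer1, ind1]

private lemma auxNlUniv (ρ : ℝ → ℝ) : nlPer1 ρ (univ : Set ℝ) = 0 := by
  simp [nlPer1, ind1]

private lemma auxAeNonneg (ρ : ℝ → ℝ) (hnn : ∀ t : ℝ, t ≠ 0 → 0 ≤ ρ t) (t : ℝ) :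
    ∀ᵐ s ∂(volume : Measure ℝ), 0 ≤ ρ (s - t) := by
  rw [ae_iff]
  refine measure_mono_null (fun s hs => ?_) (measure_singleton t)
  simp only [mem_setOf_eq, not_le] at hs
  by_contra h
  exact absurd (hnn (s - t) (sub_ne_zero_of_ne h)) (not_le.mpr hs)

end

noncomputable section

/-- For a measurable even nonnegative kernel `ρ` on `ℝ ∖ {0}` with
`∫ |t| ρ(t) dt = 1`: the critical energy of a bounded open interval `(a,b)` equals
`4 ∫_{-∞}^a ∫_b^∞ ρ(s-t) ds dt`, it decreases as the interval grows, and the critical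
energy of `∅`, `ℝ` and half-lines vanishes. -/
theorem critE1_interval (ρ : ℝ → ℝ)
    (hmeas : Measurable ρ) (hnn : ∀ t : ℝ, t ≠ 0 → 0 ≤ ρ t)
    (heven : ∀ t : ℝ, ρ (-t) = ρ t)
    (hnorm : (∫ t : ℝ, |t| * ρ t) = 1)
    (hint : Integrable (fun t : ℝ => |t| * ρ t)) :
    (∀ a b : ℝ, a < b →
      critE1 ρ (Set.Ioo a b) = 4 * ∫ t in Set.Iio a, (∫ s in Set.Ioi b, ρ (s - t))) ∧
    (∀ a b a' b' : ℝ, a < b → a' ≤ a → b ≤ b' →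
      critE1 ρ (Set.Ioo a' b') ≤ critE1 ρ (Set.Ioo a b)) ∧
    critE1 ρ (∅ : Set ℝ) = 0 ∧
    critE1 ρ (Set.univ : Set ℝ) = 0 ∧
    (∀ b : ℝ, critE1 ρ (Set.Ioi b) = 0) ∧
    (∀ a : ℝ, critE1 ρ (Set.Iio a) = 0) := by
  have hΨ0 := auxPsiVal ρ hnn heven hnorm hint
  have hΨ0fin : auxPsi ρ 0 ≠ ⊤ := by rw [hΨ0]; exact ENNReal.ofReal_ne_top
  have hΨfin : ∀ L : ℝ, 0 ≤ L → auxPsi ρ L ≠ ⊤ := fun L hL =>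
    ne_top_of_le_ne_top hΨ0fin (auxPsiMono ρ hL)
  -- main interval formula
  have hkey : ∀ a b : ℝ, a < b → critE1 ρ (Ioo a b) = 4 * (auxPsi ρ (b - a)).toReal := by
    intro a b hab
    have hL : (0:ℝ) < b - a := by linarith
    have hXP := auxXvPsi ρ hmeas hL
    have hXfin : auxXv ρ (b - a) ≠ ⊤ :=
      ne_top_of_le_ne_top hΨ0fin (hXP ▸ le_self_add)
    have hsum := auxIooSum ρ hmeas heven hab
    have hfin : ((∫⁻ s in Ioo a b, ∫⁻ t in (Ioo a b)ᶜ, ENNReal.ofReal (ρ (s - t))) +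
        ∫⁻ s in (Ioo a b)ᶜ, ∫⁻ t in Ioo a b, ENNReal.ofReal (ρ (s - t))) ≠ ⊤ := by
      rw [hsum]
      exact ENNReal.mul_ne_top (by simp) hXfin
    have hnl := auxNlPer ρ hmeas hnn _ measurableSet_Ioo hfin
    rw [hsum] at hnl
    have htr : (auxXv ρ (b - a)).toReal + (auxPsi ρ (b - a)).toReal = 2⁻¹ := by
      rw [← ENNReal.toReal_add hXfin (hΨfin _ hL.le), hXP, hΨ0,
        ENNReal.toReal_ofReal (by norm_num)]
    have h4 : ((4 : ℝ≥0∞) * auxXv ρ (b - a)).toReal = 4 * (auxXv ρ (b - a)).toReal := by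
      rw [ENNReal.toReal_mul]
      norm_num
    rw [critE1, auxPer1Ioo hab, hnl, h4]
    linarith
  refine ⟨?_, ?_, ?_, ?_, ?_, ?_⟩
  · -- interval formula with the double integral on the right
    intro a b hab
    have hL : (0:ℝ) < b - a := by linarith
    have hRl := auxRHSlint ρ hmeas heven hab
    have hconv := auxIint (volume.restrict (Iio a)) (volume.restrict (Ioi b))
      (fun t s => ρ (s - t))
      (hmeas.comp (measurable_snd.sub measurable_fst))
      (fun t => ae_restrict_of_ae (auxAeNonneg ρ hnn t))
      (by rw [hRl]; exact hΨfin _ hL.le)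
    have hR : (∫ t in Iio a, ∫ s in Ioi b, ρ (s - t)) = (auxPsi ρ (b - a)).toReal :=
      hconv.trans (congrArg ENNReal.toReal hRl)
    rw [hkey a b hab, hR]
  · -- monotonicity
    intro a b a' b' hab ha hb
    have hab' : a' < b' := by linarith
    rw [hkey a b hab, hkey a' b' hab']
    have hm := ENNReal.toReal_mono (hΨfin (b - a) (by linarith))
      (auxPsiMono ρ (show b - a ≤ b' - a' by linarith))
    linarith
  · -- empty set
    rw [critE1, auxNlEmpty, per1, essBd1_empty]
    simp
  · -- whole line
    rw [critE1, auxNlUniv, per1, essBd1_univ]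
    simp
  · -- right half-lines
    intro b
    have hsum : ((∫⁻ s in Ioi b, ∫⁻ t in (Ioi b)ᶜ, ENNReal.ofReal (ρ (s - t))) +
        ∫⁻ s in (Ioi b)ᶜ, ∫⁻ t in Ioi b, ENNReal.ofReal (ρ (s - t))) =
        auxPsi ρ 0 + auxPsi ρ 0 := by
      rw [compl_Ioi, auxDE ρ hmeas b, auxDF ρ hmeas heven b]
    have hfin : ((∫⁻ s in Ioi b, ∫⁻ t in (Ioi b)ᶜ, ENNReal.ofReal (ρ (s - t))) +
        ∫⁻ s in (Ioi b)ᶜ, ∫⁻ t in Ioi b, ENNReal.ofReal (ρ (s - t))) ≠ ⊤ := by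
      rw [hsum]
      exact ENNReal.add_ne_top.mpr ⟨hΨ0fin, hΨ0fin⟩
    have hnl := auxNlPer ρ hmeas hnn _ measurableSet_Ioi hfin
    rw [hsum, hΨ0, ← ENNReal.ofReal_add (by norm_num) (by norm_num)] at hnl
    rw [critE1, auxPer1Ioi, hnl, ENNReal.toReal_ofReal (by norm_num)]
    norm_num
  · -- left half-lines
    intro a
    have hsum : ((∫⁻ s in Iio a, ∫⁻ t in (Iio a)ᶜ, ENNReal.ofReal (ρ (s - t))) +
        ∫⁻ s in (Iio a)ᶜ, ∫⁻ t in Iio a, ENNReal.ofReal (ρ (s - t))) =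
        auxPsi ρ 0 + auxPsi ρ 0 := by
      rw [compl_Iio, auxDG ρ hmeas heven a, auxDH ρ hmeas a]
    have hfin : ((∫⁻ s in Iio a, ∫⁻ t in (Iio a)ᶜ, ENNReal.ofReal (ρ (s - t))) +
        ∫⁻ s in (Iio a)ᶜ, ∫⁻ t in Iio a, ENNReal.ofReal (ρ (s - t))) ≠ ⊤ := by
      rw [hsum]
      exact ENNReal.add_ne_top.mpr ⟨hΨ0fin, hΨ0fin⟩
    have hnl := auxNlPer ρ hmeas hnn _ measurableSet_Iio hfin
    rw [hsum, hΨ0, ← ENNReal.ofReal_add (by norm_num) (by norm_num)] at hnl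
    rw [critE1, auxPer1Iio, hnl, ENNReal.toReal_ofReal (by norm_num)]
    norm_num

end
end

section
/- Let n = 2, G satisfy (H1)–(H2), γ ∈ (0,1), and let δ : (0,∞) → (0,1/4) be the function vanishing at 0⁺ from the existence theorem. For any α ∈ (0,1), there exist positive constants r = r(α) and ε̄₂ = ε̄₂(G,γ,α) such that: if E ⊆ ℝ² is a convex set with B_{1−δ(ε)} ⊆ E ⊆ B_{1+δ(ε)} for some 0 < ε < ε̄₂, then for H¹-a.e. x ∈ ∂E, the truncated cone {y ∈ B_r(x) : ((x−y)/|x−y|)·ν_E(x) ≥ α} is contained in E, where ν_E(x) is the outer unit normal to E at x. -/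
open MeasureTheory Metric Set Filter
open scoped ENNReal NNReal Topology Pointwise

noncomputable section

/-- Indicator function (with value `1`) of a set. -/
def ind {n : ℕ} (E : Set (EuclideanSpace ℝ (Fin n))) (x : EuclideanSpace ℝ (Fin n)) : ℝ :=
  E.indicator (fun _ => (1 : ℝ)) x

/-- Nonlocal perimeter `Per_G(E) = ∬ |1_E(x) - 1_E(y)| G(x-y) dx dy`. -/
def nlPer {n : ℕ} (G : EuclideanSpace ℝ (Fin n) → ℝ) (E : Set (EuclideanSpace ℝ (Fin n))) : ℝ :=
  ∫ x, ∫ y, |ind E x - ind E y| * G (x - y)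

/-- Rescaled kernel `G_ε(x) = ε^{-(n+1)} G(x/ε)`. -/
def resc {n : ℕ} (G : EuclideanSpace ℝ (Fin n) → ℝ) (ε : ℝ)
    (x : EuclideanSpace ℝ (Fin n)) : ℝ :=
  ε ^ (-((n : ℤ) + 1)) * G (ε⁻¹ • x)

/-- Divergence of a vector field on `ℝⁿ`. -/
def divg {n : ℕ} (φ : EuclideanSpace ℝ (Fin n) → EuclideanSpace ℝ (Fin n))
    (x : EuclideanSpace ℝ (Fin n)) : ℝ :=
  ∑ i, fderiv ℝ φ x (EuclideanSpace.single i 1) i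

/-- Distributional perimeter (as an extended nonnegative real), defined by duality with
compactly supported `C¹` vector fields bounded by `1`. -/
def per {n : ℕ} (E : Set (EuclideanSpace ℝ (Fin n))) : ℝ≥0∞ :=
  ⨆ (φ : EuclideanSpace ℝ (Fin n) → EuclideanSpace ℝ (Fin n)) (_ : ContDiff ℝ 1 φ)
    (_ : HasCompactSupport φ) (_ : ∀ x, ‖φ x‖ ≤ 1),
      ENNReal.ofReal (∫ x in E, divg φ x)

/-- `E` is a set of finite perimeter. -/
def HasFinPer {n : ℕ} (E : Set (EuclideanSpace ℝ (Fin n))) : Prop :=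
  MeasurableSet E ∧ per E < ⊤

/-- The perimeter `P(E)` as a real number. -/
def peri {n : ℕ} (E : Set (EuclideanSpace ℝ (Fin n))) : ℝ := (per E).toReal

/-- The constant `K_{1,n} = ⨍_{S^{n-1}} |σ·ν| dH^{n-1}(σ)`. -/
def Kconst {n : ℕ} (ν : EuclideanSpace ℝ (Fin n)) : ℝ :=
  ⨍ σ in sphere (0 : EuclideanSpace ℝ (Fin n)) 1, |(inner ℝ σ ν : ℝ)| ∂ μH[(n : ℝ) - 1]

/-- Hypothesis (H1): `G` is nonnegative, measurable and radial, `G(x) = g(|x|)`. -/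
def HypH1 {n : ℕ} (G : EuclideanSpace ℝ (Fin n) → ℝ) (g : ℝ → ℝ) : Prop :=
  Measurable g ∧ (∀ r : ℝ, 0 < r → 0 ≤ g r) ∧ (∀ x, G x = g ‖x‖)

/-- Hypothesis (H2): the first moment of `G` is finite and equals `1/K_{1,n}`. -/
def HypH2 {n : ℕ} (G : EuclideanSpace ℝ (Fin n) → ℝ) : Prop :=
  Integrable (fun x : EuclideanSpace ℝ (Fin n) => ‖x‖ * G x) ∧
    ∀ ν : EuclideanSpace ℝ (Fin n), ‖ν‖ = 1 →
      (∫ x : EuclideanSpace ℝ (Fin n), ‖x‖ * G x) = (Kconst ν)⁻¹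

/-- Hypothesis (H3): `G ∈ W^{1,1}_loc(ℝⁿ \ {0})`, finite second moment of the radial
derivative, and `g'(r) = O(r^{-(n+1)})` at infinity. -/
def HypH3 (n : ℕ) (g : ℝ → ℝ) : Prop :=
  (∀ r : ℝ, 0 < r → DifferentiableAt ℝ g r) ∧
  Integrable (fun x : EuclideanSpace ℝ (Fin n) => ‖x‖ ^ 2 * |deriv g ‖x‖|) ∧
  ∃ C R : ℝ, 0 < C ∧ 0 < R ∧ ∀ r : ℝ, R ≤ r → |deriv g r| ≤ C * r ^ (-((n : ℤ) + 1))

/-- The functional `F_{γ,G_ε}(E) = P(E) - γ Per_{G_ε}(E)`. -/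
def Fen {n : ℕ} (γ : ℝ) (G : EuclideanSpace ℝ (Fin n) → ℝ) (ε : ℝ)
    (E : Set (EuclideanSpace ℝ (Fin n))) : ℝ :=
  peri E - γ * nlPer (resc G ε) E

/-- `E` is a minimizer of `F_{γ,G_ε}` under the volume constraint `|E| = |B₁|`. -/
def IsMinim {n : ℕ} (γ : ℝ) (G : EuclideanSpace ℝ (Fin n) → ℝ) (ε : ℝ)
    (E : Set (EuclideanSpace ℝ (Fin n))) : Prop :=
  HasFinPer E ∧ volume E = volume (ball (0 : EuclideanSpace ℝ (Fin n)) 1) ∧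
    ∀ F : Set (EuclideanSpace ℝ (Fin n)), HasFinPer F →
      volume F = volume (ball (0 : EuclideanSpace ℝ (Fin n)) 1) →
        Fen γ G ε E ≤ Fen γ G ε F

/-- `x` is a point of the reduced boundary of `E` with measure-theoretic outer unit normal
`ν`: the blow-ups of `E` at `x` converge, locally in measure, to the half-space
`{y : y·ν ≤ 0}`. -/
def HasOutNormalAt {n : ℕ} (E : Set (EuclideanSpace ℝ (Fin n)))
    (x ν : EuclideanSpace ℝ (Fin n)) : Prop :=
  ‖ν‖ = 1 ∧ ∀ R : ℝ, 0 < R →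
    Tendsto (fun r : ℝ =>
        volume (symmDiff {y ∈ ball (0 : EuclideanSpace ℝ (Fin n)) R | x + r • y ∈ E}
          {y ∈ ball (0 : EuclideanSpace ℝ (Fin n)) R | (inner ℝ y ν : ℝ) ≤ 0}))
      (𝓝[>] (0 : ℝ)) (𝓝 0)

/-- The reduced boundary `∂*E`. -/
def redBdry {n : ℕ} (E : Set (EuclideanSpace ℝ (Fin n))) : Set (EuclideanSpace ℝ (Fin n)) :=
  {x | ∃ ν, HasOutNormalAt E x ν}

open Classical in
/-- The measure-theoretic outer unit normal `ν_E(x)` (zero where undefined). -/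
def outNormal {n : ℕ} (E : Set (EuclideanSpace ℝ (Fin n))) (x : EuclideanSpace ℝ (Fin n)) :
    EuclideanSpace ℝ (Fin n) :=
  if h : ∃ ν, HasOutNormalAt E x ν then h.choose else 0

/-- `P̃_G(E) = 2 ∫_E ∫_{∂*E} G(x-y) (y-x)·ν_E(y) dH^{n-1}(y) dx`. -/
def Ptil {n : ℕ} (G : EuclideanSpace ℝ (Fin n) → ℝ) (E : Set (EuclideanSpace ℝ (Fin n))) : ℝ :=
  2 * ∫ x in E, (∫ y in redBdry E,
        G (x - y) * (inner ℝ (y - x) (outNormal E y) : ℝ) ∂ μH[(n : ℝ) - 1])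

/-- A convex set with nonempty interior lies in the closed halfspace determined by a
measure-theoretic outer normal at a closure point. -/
lemma supporting_halfspace {E : Set (EuclideanSpace ℝ (Fin 2))} (hE : Convex ℝ E)
    (hne : (interior E).Nonempty) {x ν : EuclideanSpace ℝ (Fin 2)}
    (h : HasOutNormalAt E x ν) (hx : x ∈ closure E) :
    ∀ z ∈ E, (inner ℝ (z - x) ν : ℝ) ≤ 0 := by
  by_contra hcon
  push_neg at hcon
  obtain ⟨z, hzE, hz⟩ := hcon
  obtain ⟨w, hw⟩ := hne
  have hν1 : ‖ν‖ = 1 := h.1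
  set c : ℝ := inner ℝ (z - x) ν with hc
  have hc0 : 0 < c := hz
  set t : ℝ := min (1/2) (c / (2 * (‖w - z‖ + 1))) with ht
  have ht0 : 0 < t := lt_min (by norm_num) (by positivity)
  have ht1 : t ≤ 1/2 := min_le_left _ _
  set z' : EuclideanSpace ℝ (Fin 2) := t • w + (1 - t) • z with hz'
  have hz'i : z' ∈ interior E :=
    hE.combo_interior_closure_mem_interior hw (subset_closure hzE) ht0 (by linarith) (by ring)
  have hz'ν : 0 < (inner ℝ (z' - x) ν : ℝ) := by
    have h1 : (inner ℝ (z' - x) ν : ℝ) = c + t * inner ℝ (w - z) ν := by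
      have hzz : z' - x = (z - x) + t • (w - z) := by rw [hz']; module
      rw [hzz, inner_add_left, real_inner_smul_left, hc]
    have h2 : |(inner ℝ (w - z) ν : ℝ)| ≤ ‖w - z‖ := by
      simpa [hν1] using abs_real_inner_le_norm (w - z) ν
    have h4 : t ≤ c / (2 * (‖w - z‖ + 1)) := min_le_right _ _
    have h5 : 0 ≤ ‖w - z‖ := norm_nonneg _
    have h3 : t * ‖w - z‖ ≤ c / 2 := by
      have h6 : t * ‖w - z‖ ≤ c / (2 * (‖w - z‖ + 1)) * ‖w - z‖ :=
        mul_le_mul_of_nonneg_right h4 h5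
      calc t * ‖w - z‖ ≤ c / (2 * (‖w - z‖ + 1)) * ‖w - z‖ := h6
        _ ≤ c / 2 := by
            rw [div_mul_eq_mul_div, div_le_div_iff₀ (by positivity) (by norm_num)]
            nlinarith
    have h7 := (abs_le.mp h2).1
    nlinarith [mul_le_mul_of_nonneg_left h7 ht0.le]
  obtain ⟨ρ₀, hρ₀, hball⟩ := Metric.isOpen_iff.mp isOpen_interior z' hz'i
  set c' : ℝ := inner ℝ (z' - x) ν with hc'
  set ρ : ℝ := min ρ₀ c' with hρ
  have hρpos : 0 < ρ := lt_min hρ₀ hz'ν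
  set v : EuclideanSpace ℝ (Fin 2) := z' - x with hv
  set R : ℝ := ‖v‖ + ρ + 1 with hRdef
  have hRpos : 0 < R := by positivity
  set m := volume (ball v ρ) with hm
  have hmpos : 0 < m := measure_ball_pos _ _ hρpos
  have hsub : ∀ r : ℝ, 0 < r → r < 1 →
      ball v ρ ⊆ symmDiff {y ∈ ball (0 : EuclideanSpace ℝ (Fin 2)) R | x + r • y ∈ E}
        {y ∈ ball (0 : EuclideanSpace ℝ (Fin 2)) R | (inner ℝ y ν : ℝ) ≤ 0} := by
    intro r hr hr1 y hy
    have hyv : ‖y - v‖ < ρ := by rwa [mem_ball, dist_eq_norm] at hy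
    have hyR : y ∈ ball (0 : EuclideanSpace ℝ (Fin 2)) R := by
      rw [mem_ball_zero_iff]
      have h8 : ‖y‖ ≤ ‖v‖ + ‖y - v‖ := by
        calc ‖y‖ = ‖v + (y - v)‖ := by congr 1; abel
          _ ≤ ‖v‖ + ‖y - v‖ := norm_add_le _ _
      linarith [hyv, hRdef]
    have h6 : |(inner ℝ (y - v) ν : ℝ)| ≤ ‖y - v‖ := by
      simpa [hν1] using abs_real_inner_le_norm (y - v) ν
    have h7 : 0 < (inner ℝ y ν : ℝ) := by
      have h8 : (inner ℝ (y - v) ν : ℝ) = inner ℝ y ν - inner ℝ v ν := by rw [inner_sub_left]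
      have h9 : ρ ≤ c' := min_le_right _ _
      have hvν : (inner ℝ v ν : ℝ) = c' := rfl
      have h10 := (abs_le.mp h6).1
      linarith
    have hmemb : x + y ∈ ball z' ρ₀ := by
      rw [mem_ball, dist_eq_norm]
      have h11 : x + y - z' = y - v := by rw [hv]; abel
      rw [h11]
      exact hyv.trans_le (min_le_left _ _)
    have hxyE : x + y ∈ interior E := hball hmemb
    have h12 : x + r • y = r • (x + y) + (1 - r) • x := by module
    have h13 : x + r • y ∈ interior E := by
      rw [h12]
      exact hE.combo_interior_closure_mem_interior hxyE hx hr (by linarith) (by ring)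
    rw [Set.mem_symmDiff]
    left
    refine ⟨⟨hyR, interior_subset h13⟩, fun hmem2 => ?_⟩
    exact absurd hmem2.2 (not_le.mpr h7)
  have htend := h.2 R hRpos
  have hev1 : ∀ᶠ r in 𝓝[>] (0 : ℝ),
      volume (symmDiff {y ∈ ball (0 : EuclideanSpace ℝ (Fin 2)) R | x + r • y ∈ E}
        {y ∈ ball (0 : EuclideanSpace ℝ (Fin 2)) R | (inner ℝ y ν : ℝ) ≤ 0}) < m :=
    htend.eventually_lt_const hmpos
  have hev2 : ∀ᶠ r in 𝓝[>] (0 : ℝ), r < 1 :=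
    eventually_nhdsWithin_of_eventually_nhds (eventually_lt_nhds (by norm_num))
  have hev3 : ∀ᶠ r in 𝓝[>] (0 : ℝ), 0 < r := eventually_mem_nhdsWithin
  obtain ⟨r, h1, h2, h3⟩ := (hev1.and (hev2.and hev3)).exists
  exact absurd (measure_mono (hsub r h3 h2)) (not_le.mpr h1)

set_option maxHeartbeats 1600000 in
/-- In dimension `2`, for any `α ∈ (0,1)` there are `r > 0` and
`ε̄₂ > 0` such that any convex set squeezed between `B_{1-δ(ε)}` and `B_{1+δ(ε)}`
(`0 < ε < ε̄₂`) contains, around `H¹`-a.e. boundary point `x`, the truncated cone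
`{y ∈ B_r(x) : (x-y)/|x-y| · ν_E(x) ≥ α}`. -/
theorem cone_property_of_convex_minimizers
    (G : EuclideanSpace ℝ (Fin 2) → ℝ) (g : ℝ → ℝ)
    (hH1 : HypH1 G g) (hH2 : HypH2 G)
    (γ : ℝ) (hγ : γ ∈ Set.Ioo (0 : ℝ) 1)
    (δ : ℝ → ℝ)
    (hδ1 : ∀ ε : ℝ, 0 < ε → δ ε ∈ Set.Ioo (0 : ℝ) (1 / 4))
    (hδ2 : Tendsto δ (𝓝[>] (0 : ℝ)) (𝓝 0))
    (α : ℝ) (hα : α ∈ Set.Ioo (0 : ℝ) 1) :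
    ∃ r ε₂ : ℝ, 0 < r ∧ 0 < ε₂ ∧
      ∀ ε : ℝ, 0 < ε → ε < ε₂ →
        ∀ E : Set (EuclideanSpace ℝ (Fin 2)), Convex ℝ E →
          ball (0 : EuclideanSpace ℝ (Fin 2)) (1 - δ ε) ⊆ E →
          E ⊆ ball (0 : EuclideanSpace ℝ (Fin 2)) (1 + δ ε) →
          ∀ᵐ x ∂(μH[(1 : ℝ)].restrict (frontier E)),
            ∀ y ∈ ball x r,
              α ≤ ‖x - y‖⁻¹ * (inner ℝ (x - y) (outNormal E x) : ℝ) → y ∈ E := by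
  obtain ⟨hα0, hα1⟩ := hα
  set η : ℝ := α ^ 2 / 64 with hηdef
  have hη0 : 0 < η := by positivity
  have hη14 : η < 1 / 4 := by nlinarith
  have hevδ : {ε : ℝ | δ ε < η} ∈ 𝓝[>] (0 : ℝ) := hδ2.eventually_lt_const hη0
  obtain ⟨ε₂, hε₂, hsubδ⟩ := mem_nhdsGT_iff_exists_Ioo_subset.mp hevδ
  refine ⟨α / 2, ε₂, by positivity, hε₂, ?_⟩
  intro ε hε hεlt E hconv hin hout
  have hδη : δ ε < η := hsubδ ⟨hε, hεlt⟩
  have hδ0 : 0 < δ ε := (hδ1 ε hε).1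
  refine (ae_restrict_mem isClosed_frontier.measurableSet).mono fun x hx => ?_
  intro y hy hcone
  by_cases hex : ∃ ν, HasOutNormalAt E x ν
  swap
  · exfalso
    rw [outNormal, dif_neg hex] at hcone
    simp only [inner_zero_right, mul_zero] at hcone
    linarith
  have hνeq : outNormal E x = hex.choose := dif_pos hex
  set ν : EuclideanSpace ℝ (Fin 2) := hex.choose with hνdef
  have hν : HasOutNormalAt E x ν := hex.choose_spec
  have hν1 : ‖ν‖ = 1 := hν.1
  rw [hνeq] at hcone
  clear_value ν
  have hxcl : x ∈ closure E := frontier_subset_closure hx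
  have h1δ : (0 : ℝ) < 1 - δ ε := by linarith
  have hball' : ball (0 : EuclideanSpace ℝ (Fin 2)) (1 - δ ε) ⊆ interior E :=
    isOpen_ball.subset_interior_iff.mpr hin
  have hne : (interior E).Nonempty := ⟨0, hball' (mem_ball_self h1δ)⟩
  have hsupp := supporting_halfspace hconv hne hν hxcl
  have hsupp' : closure E ⊆ {z | (inner ℝ (z - x) ν : ℝ) ≤ 0} :=
    closure_minimal (fun z hz => hsupp z hz)
      (isClosed_le ((continuous_id.sub continuous_const).inner continuous_const)
        continuous_const)
  -- lower bound on x·ν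
  have hxν : 1 - δ ε ≤ (inner ℝ x ν : ℝ) := by
    have hz : ((1 - δ ε) • ν) ∈ closure E := by
      apply closure_mono hin
      rw [closure_ball (0 : EuclideanSpace ℝ (Fin 2)) h1δ.ne', mem_closedBall_zero_iff,
        norm_smul, hν1, mul_one, Real.norm_eq_abs, abs_of_pos h1δ]
    have h2 := hsupp' hz
    simp only [Set.mem_setOf_eq, inner_sub_left, real_inner_smul_left] at h2
    have h3 : (inner ℝ ν ν : ℝ) = 1 := by
      rw [real_inner_self_eq_norm_sq, hν1]; norm_num
    rw [h3] at h2
    linarith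
  -- upper bound on ‖x‖
  have hxnorm : ‖x‖ ≤ 1 + δ ε := by
    have h4 : closure E ⊆ closedBall (0 : EuclideanSpace ℝ (Fin 2)) (1 + δ ε) :=
      closure_minimal (hout.trans ball_subset_closedBall) isClosed_closedBall
    exact mem_closedBall_zero_iff.mp (h4 hxcl)
  -- set up the cone geometry
  set w : EuclideanSpace ℝ (Fin 2) := x - y with hwdef
  clear_value w
  set d : ℝ := ‖w‖ with hddef
  clear_value d
  have hd0 : 0 < d := by
    rcases eq_or_ne w 0 with hw0 | hw0
    · exfalso
      have hzz : (inner ℝ w ν : ℝ) = 0 := by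
        have h0 : w = 0 := hw0
        rw [h0, inner_zero_left]
      rw [hzz, mul_zero] at hcone
      linarith
    · rw [hddef]
      exact norm_pos_iff.mpr hw0
  have hdr : d < α / 2 := by
    rw [hddef, hwdef, ← dist_eq_norm, dist_comm]
    exact mem_ball.mp hy
  have hwν : α * d ≤ (inner ℝ w ν : ℝ) := by
    have h5 := mul_le_mul_of_nonneg_right hcone hd0.le
    have h6 : d⁻¹ * inner ℝ w ν * d = inner ℝ w ν := by field_simp
    rwa [h6] at h5
  set u : EuclideanSpace ℝ (Fin 2) := d⁻¹ • w with hudef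
  clear_value u
  have hu1 : ‖u‖ = 1 := by
    rw [hudef, norm_smul, Real.norm_eq_abs, abs_of_pos (inv_pos.mpr hd0), ← hddef,
      inv_mul_cancel₀ hd0.ne']
  have huν : α ≤ (inner ℝ u ν : ℝ) := by
    rw [hudef, real_inner_smul_left]
    calc α = d⁻¹ * (α * d) := by field_simp
      _ ≤ d⁻¹ * inner ℝ w ν := mul_le_mul_of_nonneg_left hwν (by positivity)
  set a : ℝ := inner ℝ x ν with hadef
  clear_value a
  have ha1 : 1 - η ≤ a := by linarith
  have ha2 : a ≤ 1 + η := by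
    have := real_inner_le_norm x ν
    rw [hν1, mul_one] at this
    linarith
  -- tangential part of x
  have hxT : ‖x - a • ν‖ ^ 2 = ‖x‖ ^ 2 - a ^ 2 := by
    rw [norm_sub_sq_real, real_inner_smul_right, norm_smul, Real.norm_eq_abs, hν1,
      mul_one, sq_abs, ← hadef]
    ring
  have hxT2 : ‖x - a • ν‖ ≤ α / 4 := by
    have h6 : ‖x - a • ν‖ ^ 2 ≤ 4 * η := by
      rw [hxT]
      nlinarith [hxnorm, norm_nonneg x]
    nlinarith [norm_nonneg (x - a • ν)]
  have hxu : α / 2 ≤ (inner ℝ x u : ℝ) := by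
    have hdec : (inner ℝ x u : ℝ) = inner ℝ (x - a • ν) u + a * inner ℝ ν u := by
      rw [inner_sub_left, real_inner_smul_left]; ring
    have h7 : |(inner ℝ (x - a • ν) u : ℝ)| ≤ ‖x - a • ν‖ := by
      simpa [hu1] using abs_real_inner_le_norm (x - a • ν) u
    have h8 : (inner ℝ ν u : ℝ) = inner ℝ u ν := real_inner_comm _ _
    have h9 : (1 - η) * α ≤ a * inner ℝ ν u := by
      rw [h8]
      apply mul_le_mul ha1 huν hα0.le (by linarith)
    have h10 := (abs_le.mp h7).1
    rw [hdec]
    nlinarith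
  -- the point b deep inside the ball
  set b : EuclideanSpace ℝ (Fin 2) := x - (α / 2) • u with hbdef
  clear_value b
  have hbn : ‖b‖ < 1 - η := by
    have h11 : ‖b‖ ^ 2 = ‖x‖ ^ 2 - α * inner ℝ x u + (α / 2) ^ 2 := by
      rw [hbdef, norm_sub_sq_real, real_inner_smul_right, norm_smul, hu1]
      rw [Real.norm_eq_abs, abs_of_pos (by positivity : (0:ℝ) < α / 2)]
      ring
    have h12 : ‖b‖ ^ 2 ≤ (1 + η) ^ 2 - α ^ 2 / 4 := by
      rw [h11]
      nlinarith [norm_nonneg x]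
    nlinarith [norm_nonneg b]
  have hb : b ∈ interior E := hball' (mem_ball_zero_iff.mpr (by linarith))
  set t : ℝ := d / (α / 2) with htdef
  clear_value t
  have ht0 : 0 < t := by rw [htdef]; positivity
  have ht1 : t < 1 := by
    rw [htdef]
    exact (div_lt_one (by positivity)).mpr hdr
  have hyeq : y = t • b + (1 - t) • x := by
    have hts : t * (α / 2) = d := by
      rw [htdef]; field_simp
    have hdu : d • u = w := by
      rw [hudef, smul_smul, mul_inv_cancel₀ hd0.ne', one_smul]
    have h13 : t • b + (1 - t) • x = x - (t * (α / 2)) • u := by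
      rw [hbdef]; module
    rw [h13, hts, hdu, hwdef]
    abel
  have h14 : t • b + (1 - t) • x ∈ interior E :=
    hconv.combo_interior_closure_mem_interior hb hxcl ht0 (by linarith) (by ring)
  rw [hyeq]
  exact interior_subset h14
end
end
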